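/- There exists a market that admits an optimal dynamic pricing but admits no Walrasian equilibrium. Concretely, the market with 7 items {a_1, a_2, b_1, b_2, α_1, α_2, β} and 4 budget-additive buyers c_1, c_2, d_1, d_2, each with budget 2 — where for i ∈ {1,2}, buyer c_i has item values 1 for a_i, b_i, α_i and 0 otherwise, and buyer d_i has item value 2 for β, 1 for a_i and b_i, and 0 otherwise — admits an optimal dynamic pricing but no Walrasian equilibrium. -/

import Mathlib

set_option maxRecDepth 100000


open Finset

section Defs

variable {M : Type*} [Fintype M] [DecidableEq M] {ι : Type*} [Fintype ι]

/-- A valuation is monotone. -/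
def MonotoneVal (v : Finset M → ℝ) : Prop :=
  ∀ ⦃S T : Finset M⦄, S ⊆ T → v S ≤ v T

/-- Quasi-linear utility of a bundle `S` at prices `p`. -/
def util (v : Finset M → ℝ) (p : M → ℝ) (S : Finset M) : ℝ :=
  v S - ∑ x ∈ S, p x

/-- `S` is a utility-maximizing bundle for valuation `v` at prices `p`. -/
def InDemand (v : Finset M → ℝ) (p : M → ℝ) (S : Finset M) : Prop :=
  ∀ T : Finset M, util v p T ≤ util v p S

/-- Gross-substitutes valuation. -/
def GrossSubstitutes (v : Finset M → ℝ) : Prop :=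
  ∀ p q : M → ℝ, (∀ x, 0 ≤ p x) → (∀ x, 0 ≤ q x) → (∀ x, p x ≤ q x) →
    ∀ A : Finset M, InDemand v p A →
      ∃ B : Finset M, InDemand v q B ∧ ∀ x ∈ A, p x = q x → x ∈ B

/-- `v` is a `k`-demand (multi-demand) valuation:
`v S` is the maximum of `∑_{x ∈ T} v {x}` over `T ⊆ S` with `|T| ≤ k`. -/
def MultiDemand (v : Finset M → ℝ) (k : ℕ) : Prop :=
  ∀ S : Finset M,
    IsGreatest {t : ℝ | ∃ T ⊆ S, T.card ≤ k ∧ t = ∑ x ∈ T, v {x}} (v S)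

/-- `v` is a unit-demand valuation: `v ∅ = 0` and `v S = max_{x ∈ S} v {x}`. -/
def UnitDemand (v : Finset M → ℝ) : Prop :=
  v ∅ = 0 ∧ ∀ S : Finset M, S.Nonempty →
    IsGreatest {t : ℝ | ∃ x ∈ S, t = v {x}} (v S)

/-- An allocation: a family of pairwise disjoint bundles. -/
def IsAlloc (A : ι → Finset M) : Prop :=
  ∀ i j : ι, i ≠ j → Disjoint (A i) (A j)

/-- Social welfare of an allocation. -/
def SW (v : ι → Finset M → ℝ) (A : ι → Finset M) : ℝ :=
  ∑ i, v i (A i)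

/-- An optimal allocation: it maximizes social welfare among allocations. -/
def IsOptimalAlloc (v : ι → Finset M → ℝ) (A : ι → Finset M) : Prop :=
  IsAlloc A ∧ ∀ B : ι → Finset M, IsAlloc B → SW v B ≤ SW v A

/-- `p` is an optimal dynamic pricing: every demanded bundle of every buyer is
her bundle in some optimal allocation. -/
def IsDynamicPricing (v : ι → Finset M → ℝ) (p : M → ℝ) : Prop :=
  (∀ x, 0 ≤ p x) ∧
  ∀ (i : ι) (S : Finset M), InDemand (v i) p S →
    ∃ A : ι → Finset M, IsOptimalAlloc v A ∧ A i = S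

/-- Walrasian equilibrium: every buyer gets a demanded bundle and unallocated
items have price 0. -/
def IsWalrasianEq (v : ι → Finset M → ℝ) (A : ι → Finset M) (p : M → ℝ) : Prop :=
  (∀ x, 0 ≤ p x) ∧ IsAlloc A ∧ (∀ i, InDemand (v i) p (A i)) ∧
  ∀ x : M, (∀ i, x ∉ A i) → p x = 0

/-- Item `x` is legal for buyer `i`: some optimal allocation gives `x` to `i`. -/
def LegalItem (v : ι → Finset M → ℝ) (i : ι) (x : M) : Prop :=
  ∃ A : ι → Finset M, IsOptimalAlloc v A ∧ x ∈ A i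

/-- A bundle `S` is legal for buyer `i`: `|S| = k i` and every item of `S` is legal for `i`. -/
def LegalBundle (v : ι → Finset M → ℝ) (k : ι → ℕ) (i : ι) (S : Finset M) : Prop :=
  S.card = k i ∧ ∀ x ∈ S, LegalItem v i x

/-- A legal allocation: every buyer's bundle is legal for her. -/
def LegalAlloc (v : ι → Finset M → ℝ) (k : ι → ℕ) (A : ι → Finset M) : Prop :=
  IsAlloc A ∧ ∀ i, LegalBundle v k i (A i)

/-- Submodularity condition (SM). -/
def SMcond (v : Finset M → ℝ) : Prop :=
  ∀ (x y : M) (S : Finset M), x ≠ y → x ∉ S → y ∉ S →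
    v S + v (S ∪ {x, y}) ≤ v (S ∪ {x}) + v (S ∪ {y})

/-- Condition (RGP). -/
def RGPcond (v : Finset M → ℝ) : Prop :=
  ∀ (x y z : M) (S : Finset M), x ≠ y → x ≠ z → y ≠ z → x ∉ S → y ∉ S → z ∉ S →
    v (S ∪ {x}) + v (S ∪ {y, z}) ≤
      max (v (S ∪ {y}) + v (S ∪ {x, z})) (v (S ∪ {z}) + v (S ∪ {x, y}))

/-- Condition (NP-SM) with nonnegative prices. -/
def NPSM (v : Finset M → ℝ) : Prop :=
  ¬ ∃ (p : M → ℝ) (x y : M) (S : Finset M),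
      (∀ a, 0 ≤ p a) ∧ x ≠ y ∧ x ∉ S ∧ y ∉ S ∧ 0 < p x ∧ 0 < p y ∧
      InDemand v p S ∧ InDemand v p (S ∪ {x, y}) ∧
      ∀ C : Finset M, InDemand v p C → (C ⊆ S ∨ ∃ T ⊆ S, C = T ∪ {x, y})

/-- Condition (NP-RGP) with nonnegative prices. -/
def NPRGP (v : Finset M → ℝ) : Prop :=
  ¬ ∃ (p : M → ℝ) (x y z : M) (S : Finset M),
      (∀ a, 0 ≤ p a) ∧ x ≠ y ∧ x ≠ z ∧ y ≠ z ∧ x ∉ S ∧ y ∉ S ∧ z ∉ S ∧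
      0 < p x ∧ 0 < p y ∧ 0 < p z ∧
      InDemand v p (S ∪ {x}) ∧ InDemand v p (S ∪ {y, z}) ∧
      ∀ C : Finset M, InDemand v p C →
        ((∃ T ⊆ S, C = T ∪ {x}) ∨ ∃ T ⊆ S, C = T ∪ {y, z})

end Defs

/-- Item values of the budget-additive market of Appendix D.
Items: 0 = a₁, 1 = a₂, 2 = b₁, 3 = b₂, 4 = α₁, 5 = α₂, 6 = β.
Buyers: 0 = c₁, 1 = c₂, 2 = d₁, 3 = d₂. -/
def baItemVal : Fin 4 → Fin 7 → ℝ :=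
  ![![1, 0, 1, 0, 1, 0, 0],
    ![0, 1, 0, 1, 0, 1, 0],
    ![1, 0, 1, 0, 0, 0, 2],
    ![0, 1, 0, 1, 0, 0, 2]]

/-- Budget-additive valuations with budget 2. -/
def baVal (i : Fin 4) (S : Finset (Fin 7)) : ℝ :=
  min 2 (∑ x ∈ S, baItemVal i x)


/- ### auxiliary integer model (values doubled) -/

def zw : Fin 4 → Fin 7 → ℤ :=
  ![![2, 0, 2, 0, 2, 0, 0],
    ![0, 2, 0, 2, 0, 2, 0],
    ![2, 0, 2, 0, 0, 0, 4],
    ![0, 2, 0, 2, 0, 0, 4]]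

def zp : Fin 7 → ℤ := ![2, 2, 2, 2, 1, 1, 2]

noncomputable def pR : Fin 7 → ℝ := fun x => (zp x : ℝ) / 2

def zval (i : Fin 4) (S : Finset (Fin 7)) : ℤ := min 4 (∑ x ∈ S, zw i x)

def zutil (i : Fin 4) (S : Finset (Fin 7)) : ℤ := zval i S - ∑ x ∈ S, zp x

def zSW (A : Fin 4 → Finset (Fin 7)) : ℤ := ∑ i, zval i (A i)

lemma w_cast (i : Fin 4) (x : Fin 7) : baItemVal i x = (zw i x : ℝ) / 2 := by
  fin_cases i <;> fin_cases x <;> norm_num [baItemVal, zw]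

lemma val_cast (i : Fin 4) (S : Finset (Fin 7)) : baVal i S = (zval i S : ℝ) / 2 := by
  unfold baVal zval
  push_cast
  rw [← min_div_div_right (by norm_num : (0:ℝ) ≤ 2)]
  congr 1
  · norm_num
  · rw [Finset.sum_div]
    exact Finset.sum_congr rfl fun x _ => w_cast i x

lemma util_cast (i : Fin 4) (S : Finset (Fin 7)) :
    util (baVal i) pR S = (zutil i S : ℝ) / 2 := by
  unfold util zutil pR
  rw [val_cast]
  push_cast
  rw [← Finset.sum_div]
  ring

lemma sw_cast (A : Fin 4 → Finset (Fin 7)) : SW baVal A = (zSW A : ℝ) / 2 := by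
  unfold SW zSW
  push_cast
  rw [Finset.sum_div]
  exact Finset.sum_congr rfl fun i _ => val_cast i (A i)

lemma indemand_iff (i : Fin 4) (S : Finset (Fin 7)) :
    InDemand (baVal i) pR S ↔ ∀ T : Finset (Fin 7), zutil i T ≤ zutil i S := by
  unfold InDemand
  constructor
  · intro h T
    have hT := h T
    rw [util_cast, util_cast] at hT
    have h2 : (zutil i T : ℝ) ≤ (zutil i S : ℝ) := by linarith
    exact_mod_cast h2
  · intro h T
    rw [util_cast, util_cast]
    have h2 : (zutil i T : ℝ) ≤ (zutil i S : ℝ) := by exact_mod_cast h T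
    linarith

/- ### demand characterizations -/

lemma dem0 : ∀ S : Finset (Fin 7), zutil 0 {4} ≤ zutil 0 S →
    S = {4} ∨ S = {0,4} ∨ S = {2,4} := by decide

lemma dem1 : ∀ S : Finset (Fin 7), zutil 1 {5} ≤ zutil 1 S →
    S = {5} ∨ S = {1,5} ∨ S = {3,5} := by decide

lemma dem2 : ∀ S : Finset (Fin 7), zutil 2 {6} ≤ zutil 2 S → S = {6} := by decide

lemma dem3 : ∀ S : Finset (Fin 7), zutil 3 {6} ≤ zutil 3 S → S = {6} := by decide

/- ### welfare upper bound -/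

lemma sum_indic (S : Finset (Fin 7)) (f : Fin 7 → ℝ) :
    ∑ x ∈ S, f x = ∑ x : Fin 7, if x ∈ S then f x else 0 := by
  rw [Finset.sum_ite_mem, Finset.univ_inter]

lemma ub (B : Fin 4 → Finset (Fin 7)) (hB : IsAlloc B) : SW baVal B ≤ 7 := by
  have key : ∀ (x : Fin 7) (i j : Fin 4), i ≠ j → x ∈ B i → x ∉ B j := fun x i j hij hxi =>
    Finset.disjoint_left.mp (hB i j hij) hxi
  have hI : ∀ (x : Fin 7) (i : Fin 4), (0:ℝ) ≤ (if x ∈ B i then (1:ℝ) else 0) ∧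
      (if x ∈ B i then (1:ℝ) else 0) ≤ 1 := by
    intro x i; split_ifs <;> norm_num
  have hd : ∀ (x : Fin 7) (i j : Fin 4), i ≠ j →
      (if x ∈ B i then (1:ℝ) else 0) + (if x ∈ B j then (1:ℝ) else 0) ≤ 1 := by
    intro x i j hij
    by_cases h1 : x ∈ B i
    · have h2 := key x i j hij h1
      simp [h1, h2]
    · have := (hI x j).2
      simp only [h1, if_false]
      linarith
  rw [SW, Fin.sum_univ_four]
  have s0 : ∑ x ∈ B 0, baItemVal 0 x =
      (if (0:Fin 7) ∈ B 0 then (1:ℝ) else 0) + (if (2:Fin 7) ∈ B 0 then (1:ℝ) else 0)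
        + (if (4:Fin 7) ∈ B 0 then (1:ℝ) else 0) := by
    rw [sum_indic, Fin.sum_univ_seven, show baItemVal 0 0 = 1 from rfl, show baItemVal 0 1 = 0 from rfl, show baItemVal 0 2 = 1 from rfl, show baItemVal 0 3 = 0 from rfl, show baItemVal 0 4 = 1 from rfl, show baItemVal 0 5 = 0 from rfl, show baItemVal 0 6 = 0 from rfl]
    norm_num
  have s1 : ∑ x ∈ B 1, baItemVal 1 x =
      (if (1:Fin 7) ∈ B 1 then (1:ℝ) else 0) + (if (3:Fin 7) ∈ B 1 then (1:ℝ) else 0)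
        + (if (5:Fin 7) ∈ B 1 then (1:ℝ) else 0) := by
    rw [sum_indic, Fin.sum_univ_seven, show baItemVal 1 0 = 0 from rfl, show baItemVal 1 1 = 1 from rfl, show baItemVal 1 2 = 0 from rfl, show baItemVal 1 3 = 1 from rfl, show baItemVal 1 4 = 0 from rfl, show baItemVal 1 5 = 1 from rfl, show baItemVal 1 6 = 0 from rfl]
    norm_num
  have s2 : ∑ x ∈ B 2, baItemVal 2 x =
      (if (0:Fin 7) ∈ B 2 then (1:ℝ) else 0) + (if (2:Fin 7) ∈ B 2 then (1:ℝ) else 0)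
        + (if (6:Fin 7) ∈ B 2 then (2:ℝ) else 0) := by
    rw [sum_indic, Fin.sum_univ_seven, show baItemVal 2 0 = 1 from rfl, show baItemVal 2 1 = 0 from rfl, show baItemVal 2 2 = 1 from rfl, show baItemVal 2 3 = 0 from rfl, show baItemVal 2 4 = 0 from rfl, show baItemVal 2 5 = 0 from rfl, show baItemVal 2 6 = 2 from rfl]
    norm_num
  have s3 : ∑ x ∈ B 3, baItemVal 3 x =
      (if (1:Fin 7) ∈ B 3 then (1:ℝ) else 0) + (if (3:Fin 7) ∈ B 3 then (1:ℝ) else 0)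
        + (if (6:Fin 7) ∈ B 3 then (2:ℝ) else 0) := by
    rw [sum_indic, Fin.sum_univ_seven, show baItemVal 3 0 = 0 from rfl, show baItemVal 3 1 = 1 from rfl, show baItemVal 3 2 = 0 from rfl, show baItemVal 3 3 = 1 from rfl, show baItemVal 3 4 = 0 from rfl, show baItemVal 3 5 = 0 from rfl, show baItemVal 3 6 = 2 from rfl]
    norm_num
  unfold baVal
  rw [s0, s1, s2, s3]
  by_cases h62 : (6:Fin 7) ∈ B 2 <;> by_cases h63 : (6:Fin 7) ∈ B 3
  · exact absurd h63 (key 6 2 3 (by decide) h62)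
  · simp only [h62, h63, if_true, if_false]
    have m0 := min_le_left (2:ℝ) ((if (0:Fin 7) ∈ B 0 then (1:ℝ) else 0) + (if (2:Fin 7) ∈ B 0 then (1:ℝ) else 0) + (if (4:Fin 7) ∈ B 0 then (1:ℝ) else 0))
    have m1 := min_le_right (2:ℝ) ((if (1:Fin 7) ∈ B 1 then (1:ℝ) else 0) + (if (3:Fin 7) ∈ B 1 then (1:ℝ) else 0) + (if (5:Fin 7) ∈ B 1 then (1:ℝ) else 0))
    have m2 := min_le_left (2:ℝ) ((if (0:Fin 7) ∈ B 2 then (1:ℝ) else 0) + (if (2:Fin 7) ∈ B 2 then (1:ℝ) else 0) + 2)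
    have m3 := min_le_right (2:ℝ) ((if (1:Fin 7) ∈ B 3 then (1:ℝ) else 0) + (if (3:Fin 7) ∈ B 3 then (1:ℝ) else 0) + 0)
    have d1 := hd 1 1 3 (by decide)
    have d3 := hd 3 1 3 (by decide)
    have i5 := (hI 5 1).2
    linarith
  · simp only [h62, h63, if_true, if_false]
    have m0 := min_le_right (2:ℝ) ((if (0:Fin 7) ∈ B 0 then (1:ℝ) else 0) + (if (2:Fin 7) ∈ B 0 then (1:ℝ) else 0) + (if (4:Fin 7) ∈ B 0 then (1:ℝ) else 0))
    have m1 := min_le_left (2:ℝ) ((if (1:Fin 7) ∈ B 1 then (1:ℝ) else 0) + (if (3:Fin 7) ∈ B 1 then (1:ℝ) else 0) + (if (5:Fin 7) ∈ B 1 then (1:ℝ) else 0))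
    have m2 := min_le_right (2:ℝ) ((if (0:Fin 7) ∈ B 2 then (1:ℝ) else 0) + (if (2:Fin 7) ∈ B 2 then (1:ℝ) else 0) + 0)
    have m3 := min_le_left (2:ℝ) ((if (1:Fin 7) ∈ B 3 then (1:ℝ) else 0) + (if (3:Fin 7) ∈ B 3 then (1:ℝ) else 0) + 2)
    have d0 := hd 0 0 2 (by decide)
    have d2 := hd 2 0 2 (by decide)
    have i4 := (hI 4 0).2
    linarith
  · simp only [h62, h63, if_false]
    have m0 := min_le_right (2:ℝ) ((if (0:Fin 7) ∈ B 0 then (1:ℝ) else 0) + (if (2:Fin 7) ∈ B 0 then (1:ℝ) else 0) + (if (4:Fin 7) ∈ B 0 then (1:ℝ) else 0))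
    have m1 := min_le_right (2:ℝ) ((if (1:Fin 7) ∈ B 1 then (1:ℝ) else 0) + (if (3:Fin 7) ∈ B 1 then (1:ℝ) else 0) + (if (5:Fin 7) ∈ B 1 then (1:ℝ) else 0))
    have m2 := min_le_right (2:ℝ) ((if (0:Fin 7) ∈ B 2 then (1:ℝ) else 0) + (if (2:Fin 7) ∈ B 2 then (1:ℝ) else 0) + 0)
    have m3 := min_le_right (2:ℝ) ((if (1:Fin 7) ∈ B 3 then (1:ℝ) else 0) + (if (3:Fin 7) ∈ B 3 then (1:ℝ) else 0) + 0)
    have d0 := hd 0 0 2 (by decide)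
    have d2 := hd 2 0 2 (by decide)
    have d1 := hd 1 1 3 (by decide)
    have d3 := hd 3 1 3 (by decide)
    have i4 := (hI 4 0).2
    have i5 := (hI 5 1).2
    linarith

lemma opt_of (A : Fin 4 → Finset (Fin 7)) (hA : IsAlloc A) (h14 : zSW A = 14) :
    IsOptimalAlloc baVal A :=
  ⟨hA, fun B hB => le_trans (ub B hB) (by rw [sw_cast, h14]; norm_num)⟩


/-- The budget-additive market above admits an optimal dynamic
pricing but no Walrasian equilibrium. -/
theorem budget_additive_dp_without_walrasian :
    (∃ p : Fin 7 → ℝ, IsDynamicPricing baVal p) ∧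
    ¬ ∃ (A : Fin 4 → Finset (Fin 7)) (p : Fin 7 → ℝ), IsWalrasianEq baVal A p := by
  constructor
  · refine ⟨pR, fun x => ?_, fun i S hS => ?_⟩
    · have hx : (0:ℤ) ≤ zp x := by fin_cases x <;> decide
      exact div_nonneg (by exact_mod_cast hx) (by norm_num)
    · rw [indemand_iff] at hS
      fin_cases i
      · rcases dem0 S (hS {4}) with h|h|h <;> subst h
        · exact ⟨![{4},{1,5},{0,2},{6}], opt_of _ (by simp only [IsAlloc, Finset.disjoint_left]; decide) (by decide), rfl⟩
        · exact ⟨![{0,4},{1,5},{6},{3}], opt_of _ (by simp only [IsAlloc, Finset.disjoint_left]; decide) (by decide), rfl⟩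
        · exact ⟨![{2,4},{1,5},{6},{3}], opt_of _ (by simp only [IsAlloc, Finset.disjoint_left]; decide) (by decide), rfl⟩
      · rcases dem1 S (hS {5}) with h|h|h <;> subst h
        · exact ⟨![{0,4},{5},{6},{1,3}], opt_of _ (by simp only [IsAlloc, Finset.disjoint_left]; decide) (by decide), rfl⟩
        · exact ⟨![{0,4},{1,5},{6},{3}], opt_of _ (by simp only [IsAlloc, Finset.disjoint_left]; decide) (by decide), rfl⟩
        · exact ⟨![{0,4},{3,5},{6},{1}], opt_of _ (by simp only [IsAlloc, Finset.disjoint_left]; decide) (by decide), rfl⟩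
      · rcases dem2 S (hS {6}) with h <;> subst h
        exact ⟨![{0,4},{1,5},{6},{3}], opt_of _ (by simp only [IsAlloc, Finset.disjoint_left]; decide) (by decide), rfl⟩
      · rcases dem3 S (hS {6}) with h <;> subst h
        exact ⟨![{0,4},{1,5},{2},{6}], opt_of _ (by simp only [IsAlloc, Finset.disjoint_left]; decide) (by decide), rfl⟩
  · rintro ⟨A, p, hp0, hAlloc, hDem, hFree⟩
    have hub := ub A hAlloc
    rw [SW, Fin.sum_univ_four] at hub
    have hexp : ∑ i : Fin 4, ∑ x ∈ A i, p x = ∑ x : Fin 7, p x := by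
      have hdisj : ((Finset.univ : Finset (Fin 4)) : Set (Fin 4)).PairwiseDisjoint A :=
        fun i _ j _ hij => hAlloc i j hij
      rw [← Finset.sum_biUnion hdisj]
      apply Finset.sum_subset (Finset.subset_univ _)
      intro x _ hx
      exact hFree x fun i hxi => hx (Finset.mem_biUnion.mpr ⟨i, Finset.mem_univ i, hxi⟩)
    rw [Fin.sum_univ_four, Fin.sum_univ_seven] at hexp
    have d04 := hDem 0 ({0,4} : Finset (Fin 7))
    simp only [util] at d04
    rw [show baVal 0 ({0,4} : Finset (Fin 7)) = 4/2 by
          rw [val_cast, show zval 0 ({0,4} : Finset (Fin 7)) = 4 from by decide]; norm_num,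
        Finset.sum_pair (by decide : (0:Fin 7) ≠ 4)] at d04
    have d24 := hDem 0 ({2,4} : Finset (Fin 7))
    simp only [util] at d24
    rw [show baVal 0 ({2,4} : Finset (Fin 7)) = 4/2 by
          rw [val_cast, show zval 0 ({2,4} : Finset (Fin 7)) = 4 from by decide]; norm_num,
        Finset.sum_pair (by decide : (2:Fin 7) ≠ 4)] at d24
    have d4 := hDem 0 ({4} : Finset (Fin 7))
    simp only [util] at d4
    rw [show baVal 0 ({4} : Finset (Fin 7)) = 2/2 by
          rw [val_cast, show zval 0 ({4} : Finset (Fin 7)) = 2 from by decide]; norm_num,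
        Finset.sum_singleton] at d4
    have d15 := hDem 1 ({1,5} : Finset (Fin 7))
    simp only [util] at d15
    rw [show baVal 1 ({1,5} : Finset (Fin 7)) = 4/2 by
          rw [val_cast, show zval 1 ({1,5} : Finset (Fin 7)) = 4 from by decide]; norm_num,
        Finset.sum_pair (by decide : (1:Fin 7) ≠ 5)] at d15
    have d35 := hDem 1 ({3,5} : Finset (Fin 7))
    simp only [util] at d35
    rw [show baVal 1 ({3,5} : Finset (Fin 7)) = 4/2 by
          rw [val_cast, show zval 1 ({3,5} : Finset (Fin 7)) = 4 from by decide]; norm_num,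
        Finset.sum_pair (by decide : (3:Fin 7) ≠ 5)] at d35
    have d5 := hDem 1 ({5} : Finset (Fin 7))
    simp only [util] at d5
    rw [show baVal 1 ({5} : Finset (Fin 7)) = 2/2 by
          rw [val_cast, show zval 1 ({5} : Finset (Fin 7)) = 2 from by decide]; norm_num,
        Finset.sum_singleton] at d5
    have d26 := hDem 2 ({6} : Finset (Fin 7))
    simp only [util] at d26
    rw [show baVal 2 ({6} : Finset (Fin 7)) = 4/2 by
          rw [val_cast, show zval 2 ({6} : Finset (Fin 7)) = 4 from by decide]; norm_num,
        Finset.sum_singleton] at d26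
    have d202 := hDem 2 ({0,2} : Finset (Fin 7))
    simp only [util] at d202
    rw [show baVal 2 ({0,2} : Finset (Fin 7)) = 4/2 by
          rw [val_cast, show zval 2 ({0,2} : Finset (Fin 7)) = 4 from by decide]; norm_num,
        Finset.sum_pair (by decide : (0:Fin 7) ≠ 2)] at d202
    have d36 := hDem 3 ({6} : Finset (Fin 7))
    simp only [util] at d36
    rw [show baVal 3 ({6} : Finset (Fin 7)) = 4/2 by
          rw [val_cast, show zval 3 ({6} : Finset (Fin 7)) = 4 from by decide]; norm_num,
        Finset.sum_singleton] at d36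
    have d313 := hDem 3 ({1,3} : Finset (Fin 7))
    simp only [util] at d313
    rw [show baVal 3 ({1,3} : Finset (Fin 7)) = 4/2 by
          rw [val_cast, show zval 3 ({1,3} : Finset (Fin 7)) = 4 from by decide]; norm_num,
        Finset.sum_pair (by decide : (1:Fin 7) ≠ 3)] at d313
    linarith [hp0 0, hp0 1, hp0 2, hp0 3, hp0 4, hp0 5, hp0 6]
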